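/- Let E_K be any permutation of {0,1}^n, let h ∈ {0,1}^n, and let x ∈ {0,1}^n. With empty tweak, let C^(1) = C_1^(1) = HCTR_{K,h}(x) and C^(2) = C_1^(2) ‖ C_2^(2) = HCTR_{K,h}(x‖0), where |C_1^(2)| = n and C_2^(2) is a single bit. Then: (i) both encryptions compute the same internal value CC = x ⊕ h, so that C_1^(1) = E_K(x ⊕ h) ⊕ h; and (ii) if C_2^(2) = 0 then C_1^(2) = C_1^(1). -/

import Mathlib

/-- Integer represented by a bit string (msb-first). -/
def bitsToNat : List Bool → ℕ
  | [] => 0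
  | b :: t => (if b then 2 ^ t.length else 0) + bitsToNat t

/-- An `n`-bit block from a bit string of length at most `n` (msb-first). -/
def blockToBV (n : ℕ) (l : List Bool) : BitVec n := BitVec.ofNat n (bitsToNat l)

/-- `pad`: append zeros on the right to get a full `n`-bit block. -/
def padBlock (n : ℕ) (l : List Bool) : BitVec n :=
  blockToBV n (l ++ List.replicate (n - l.length) false)

/-- `parse_n` followed by padding of the last block. -/
def blocksOf (n : ℕ) (Z : List Bool) : List (BitVec n) :=
  (Z.toChunks n).map (padBlock n)

/-- Number of `n`-bit blocks obtained from parsing `Z`. -/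
def numBlocks (n : ℕ) (Z : List Bool) : ℕ := (Z.toChunks n).length

/-- The HCTR hash function: `H_h(P) = h` if `P` is empty, and otherwise
`H_h(P) = P₁h^{m+1} ⊕ ⋯ ⊕ (P_m‖0^{n-r})h² ⊕ bin_n(|P|)h` (Horner evaluation),
where the equivalence `ι` identifies `{0,1}ⁿ` with `GF(2ⁿ)` (XOR = addition). -/
def hctrHash {n : ℕ} {F : Type*} [Field F] (ι : BitVec n ≃ F) (h : F)
    (P : List Bool) : F :=
  if P.isEmpty then h
  else ((blocksOf n P).map ι ++ [ι (BitVec.ofNat n P.length)]).foldl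
    (fun acc c => (acc + c) * h) 0

/-- Bits of an `n`-bit block, msb first. -/
def bvToBits (n : ℕ) (X : BitVec n) : List Bool :=
  (List.range n).map fun i => X.toNat.testBit (n - 1 - i)

/-- The internal value `CC = P₁ ⊕ H_h(P₂‖…‖P_m‖T)` of HCTR. -/
def hctrCC {n : ℕ} {F : Type*} [Field F] (ι : BitVec n ≃ F) (hk : BitVec n)
    (T P : List Bool) : BitVec n :=
  blockToBV n (P.take n) ^^^ ι.symm (hctrHash ι (ι hk) (P.drop n ++ T))

/-- HCTR encryption with block-cipher permutation `E`, hash key `hk` and tweak `T`: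
`CC = P₁ ⊕ H_h(P₂‖…‖P_m‖T)`, `S = CC ⊕ E(CC)`, `C_i = P_i ⊕ E(S ⊕ bin_n(i-1))`
(truncated to `|P_i|` bits) for `2 ≤ i ≤ m`, and `C₁ = E(CC) ⊕ H_h(C₂‖…‖C_m‖T)`. -/
def hctrEnc {n : ℕ} {F : Type*} [Field F] (ι : BitVec n ≃ F)
    (E : Equiv.Perm (BitVec n)) (hk : BitVec n) (T P : List Bool) : List Bool :=
  let CC : BitVec n := hctrCC ι hk T P
  let S : BitVec n := CC ^^^ E CC
  let Crest : List Bool :=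
    (((P.drop n).toChunks n).zipIdx.map fun p =>
      List.zipWith xor p.1 (bvToBits n (E (S ^^^ BitVec.ofNat n (p.2 + 1))))).flatten
  let C1 : BitVec n := E CC ^^^ ι.symm (hctrHash ι (ι hk) (Crest ++ T))
  bvToBits n C1 ++ Crest

lemma bitsToNat_append (l : List Bool) (b : Bool) :
    bitsToNat (l ++ [b]) = 2 * bitsToNat l + (if b then 1 else 0) := by
  induction l with
  | nil => simp [bitsToNat]
  | cons a t ih => cases a <;> simp [bitsToNat, ih, pow_succ] <;> ring

lemma bitsToNat_range (k m : ℕ) :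
    bitsToNat ((List.range k).map fun i => m.testBit (k-1-i)) = m % 2^k := by
  induction k generalizing m with
  | zero => simp [bitsToNat, Nat.mod_one]
  | succ k ih =>
    rw [List.range_succ, List.map_append]
    have h1 : ((List.range k).map fun i => m.testBit (k+1-1-i))
        = (List.range k).map fun i => (m/2).testBit (k-1-i) := by
      apply List.map_congr_left; intro i hi; rw [List.mem_range] at hi
      have h2 : k+1-1-i = (k-1-i)+1 := by omega
      rw [h2, Nat.testBit_succ]
    simp only [h1]
    have h3 : k+1-1-k = 0 := by omega
    rw [List.map_singleton, h3, bitsToNat_append, ih, pow_succ', Nat.mod_mul,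
      Nat.testBit_zero]
    rcases Nat.mod_two_eq_zero_or_one m with h | h <;> simp [h] <;> omega

lemma bitsToNat_replicate_false (k : ℕ) : bitsToNat (List.replicate k false) = 0 := by
  induction k with
  | zero => rfl
  | succ k ih => simp [List.replicate, bitsToNat, ih]

lemma bvToBits_length (n : ℕ) (x : BitVec n) : (bvToBits n x).length = n := by
  simp [bvToBits]

lemma blockToBV_bvToBits (n : ℕ) (x : BitVec n) : blockToBV n (bvToBits n x) = x := by
  rw [blockToBV, bvToBits, bitsToNat_range, Nat.mod_eq_of_lt x.isLt, BitVec.ofNat_toNat, BitVec.setWidth_eq]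

lemma hctrHash_nil {n : ℕ} {F : Type*} [Field F] (ι : BitVec n ≃ F) (h : F) :
    hctrHash ι h [] = h := rfl

lemma toChunks_single (n : ℕ) (hn : 1 ≤ n) (b : Bool) :
    List.toChunks n [b] = [[b]] := by
  obtain ⟨m, rfl⟩ := Nat.exists_eq_add_of_le hn
  simp [List.toChunks, List.toChunks.go]

lemma hctrHash_false {n : ℕ} (hn : 1 ≤ n) {F : Type*} [Field F] (ι : BitVec n ≃ F)
    (hι : ∀ x y : BitVec n, ι (x ^^^ y) = ι x + ι y) (hone : ι 1 = 1) (h : F) :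
    hctrHash ι h [false] = h := by
  have hz : ι 0 = 0 := by
    have := hι 0 0; simpa using this
  have hpad : padBlock n [false] = 0 := by
    simp [padBlock, blockToBV, bitsToNat, bitsToNat_replicate_false]
  have h1 : (BitVec.ofNat n 1 : BitVec n) = 1 := rfl
  rw [hctrHash]
  simp only [List.isEmpty_cons, if_false, blocksOf, toChunks_single n hn,
    List.map_cons, List.map_nil, hpad, hz, List.length_cons, List.length_nil, h1, hone,
    List.singleton_append, List.cons_append, List.nil_append, List.foldl_cons, List.foldl_nil]
  simp

/-- Distinguishing attack on HCTR: with empty tweak, encrypting `x` and `x‖0` computes the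
same internal value `CC = x ⊕ h`, so `C₁⁽¹⁾ = E(x ⊕ h) ⊕ h`; moreover if the last bit
`C₂⁽²⁾` of the second ciphertext is `0`, then its first `n` bits coincide with `C⁽¹⁾`. -/
theorem hctr_distinguishing (n : ℕ) (hn : 1 ≤ n)
    (F : Type*) [Field F] (ι : BitVec n ≃ F)
    (hι : ∀ x y : BitVec n, ι (x ^^^ y) = ι x + ι y)
    (hone : ι 1 = 1)
    (E : Equiv.Perm (BitVec n)) (hk x : BitVec n) :
    hctrCC ι hk [] (bvToBits n x) = x ^^^ hk ∧
    hctrCC ι hk [] (bvToBits n x ++ [false]) = x ^^^ hk ∧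
    hctrEnc ι E hk [] (bvToBits n x) = bvToBits n (E (x ^^^ hk) ^^^ hk) ∧
    ((hctrEnc ι E hk [] (bvToBits n x ++ [false])).drop n = [false] →
      (hctrEnc ι E hk [] (bvToBits n x ++ [false])).take n =
        hctrEnc ι E hk [] (bvToBits n x)) := by
  have hlen := bvToBits_length n x
  have hd1 : (bvToBits n x).drop n = [] := List.drop_eq_nil_of_le (le_of_eq hlen)
  have ht1 : (bvToBits n x).take n = bvToBits n x := List.take_of_length_le (le_of_eq hlen)
  have hd2 : (bvToBits n x ++ [false]).drop n = [false] := List.drop_left' hlen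
  have ht2 : (bvToBits n x ++ [false]).take n = bvToBits n x := List.take_left' hlen
  have hB := blockToBV_bvToBits n x
  have CC1 : hctrCC ι hk [] (bvToBits n x) = x ^^^ hk := by
    rw [hctrCC, ht1, hd1, hB]
    simp [hctrHash_nil]
  have CC2 : hctrCC ι hk [] (bvToBits n x ++ [false]) = x ^^^ hk := by
    rw [hctrCC, ht2, hd2, hB]
    simp [hctrHash_false hn ι hι hone]
  have tcnil : List.toChunks n ([] : List Bool) = [] := by cases n <;> rfl
  have enc1 : hctrEnc ι E hk [] (bvToBits n x) = bvToBits n (E (x ^^^ hk) ^^^ hk) := by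
    rw [hctrEnc]
    simp only [CC1, hd1, tcnil, List.zipIdx_nil, List.map_nil, List.flatten_nil,
      List.nil_append, List.append_nil, hctrHash_nil, Equiv.symm_apply_apply]
  refine ⟨CC1, CC2, enc1, ?_⟩
  rw [hctrEnc]
  simp only [CC2, hd2, toChunks_single n hn false, List.zipIdx_cons, List.zipIdx_nil,
    List.map_cons, List.map_nil, List.flatten_cons, List.flatten_nil,
    List.zipIdx_nil, List.append_nil]
  obtain ⟨a, t, hat⟩ : ∃ a t, bvToBits n
      (E (x ^^^ hk ^^^ E (x ^^^ hk) ^^^ BitVec.ofNat n (0 + 1))) = a :: t := by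
    rw [bvToBits]
    obtain ⟨m, rfl⟩ : ∃ m, n = m + 1 := ⟨n - 1, by omega⟩
    exact ⟨_, _, by rw [List.range_succ_eq_map, List.map_cons]⟩
  rw [hat]
  simp only [List.zipWith_cons_cons, List.zipWith_nil_left, Bool.false_xor]
  intro h
  rw [List.drop_left' (bvToBits_length n _)] at h
  have ha : a = false := by simpa using h
  subst ha
  rw [List.take_left' (bvToBits_length n _), hctrHash_false hn ι hι hone,
    Equiv.symm_apply_apply, enc1]
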